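/- Let G1 and G2 be connected graphs with V(G1) ∩ V(G2) = {v}, and let G be their union. Let T ⊆ V(G) with |T| even, and for i = 1,2 let T_i be whichever of (T ∩ V(G_i)) \ {v} and (T ∩ V(G_i)) ∪ {v} has even cardinality. Then the minimum size of a connected-T-join of G equals the minimum size of a connected-T1-join of G1 plus the minimum size of a connected-T2-join of G2. -/

import Mathlib

open Finset
open scoped Classical

/-- A multigraph on vertex type `V` with edge index type `E`, no loops. -/
structure MGraph (V E : Type) where
  ends : E → Sym2 V
  not_loop : ∀ e, ¬ (ends e).IsDiag

namespace MGraph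

variable {V E : Type} [Fintype V] [Fintype E] [DecidableEq V] [DecidableEq E]

/-- Reachability in the multi-subgraph of `2G` given by multiplicities `m`. -/
def Reach (G : MGraph V E) (m : E → ℕ) : V → V → Prop :=
  Relation.ReflTransGen (fun a b => ∃ e, 1 ≤ m e ∧ G.ends e = s(a, b))

/-- The multi-subgraph given by multiplicities `m` is spanning and connected. -/
def Conn (G : MGraph V E) (m : E → ℕ) : Prop := ∀ u v : V, G.Reach m u v

/-- Degree of `v` in the multi-subgraph with multiplicities `m`. -/
noncomputable def deg (G : MGraph V E) (m : E → ℕ) (v : V) : ℕ :=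
  ∑ e, if v ∈ G.ends e then m e else 0

/-- Number of edges (with multiplicity). -/
def size (m : E → ℕ) : ℕ := ∑ e, m e

/-- `m` is a multi-subgraph of `2G`. -/
def Sub2 (m : E → ℕ) : Prop := ∀ e, m e ≤ 2

/-- The multi-subgraph `m` is 2-edge-connected: at least two vertices, connected,
and still connected after removing any one edge copy. -/
def TwoEC (G : MGraph V E) (m : E → ℕ) : Prop :=
  2 ≤ Fintype.card V ∧ G.Conn m ∧
    ∀ e, 1 ≤ m e → G.Conn (Function.update m e (m e - 1))

/-- A tour of `G`: a spanning connected multi-subgraph of `2G` with all degrees even. -/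
def IsTour (G : MGraph V E) (m : E → ℕ) : Prop :=
  Sub2 m ∧ G.Conn m ∧ ∀ v, Even (G.deg m v)

/-- A connected-`T`-join of `G`: a `T`-join in `2G` that is spanning and connected. -/
def IsConnTJoin (G : MGraph V E) (T : Finset V) (m : E → ℕ) : Prop :=
  Sub2 m ∧ G.Conn m ∧ ∀ v, (v ∈ T ↔ Odd (G.deg m v))

/-- `G` itself is connected. -/
def Connected (G : MGraph V E) : Prop := G.Conn (fun _ => 1)

/-- `G` itself is 2-edge-connected. -/
def TwoEdgeConnected (G : MGraph V E) : Prop := G.TwoEC (fun _ => 1)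

/-- The minimum size of a connected-`T`-join of the subgraph of `G` with vertex set
`A` and edge set `Es` (edges outside `Es` get multiplicity zero; connectivity is
required among the vertices of `A`). -/
noncomputable def optCTJrel (G : MGraph V E) (A : Finset V) (Es : Finset E)
    (T : Finset V) : ℕ :=
  sInf {n | ∃ m : E → ℕ, Sub2 m ∧ (∀ e ∉ Es, m e = 0) ∧
    (∀ u ∈ A, ∀ v ∈ A, G.Reach m u v) ∧
    (∀ v, v ∈ T ↔ Odd (G.deg m v)) ∧ size m = n}


lemma reach_mono {G : MGraph V E} {m m' : E → ℕ} (h : ∀ e, m e ≤ m' e) {u w : V}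
    (hr : G.Reach m u w) : G.Reach m' u w := by
  induction hr with
  | refl => exact Relation.ReflTransGen.refl
  | tail _ hbc ih =>
    obtain ⟨e, he, hs⟩ := hbc
    exact Relation.ReflTransGen.tail ih ⟨e, le_trans he (h e), hs⟩

lemma reach_symm {G : MGraph V E} {m : E → ℕ} {u w : V} (hr : G.Reach m u w) :
    G.Reach m w u := by
  have hsym : Symmetric (fun a b => ∃ e, 1 ≤ m e ∧ G.ends e = s(a, b)) := by
    rintro a b ⟨e, he, hs⟩
    exact ⟨e, he, by rw [hs, Sym2.eq_swap]⟩
  haveI : Std.Symm (fun a b => ∃ e, 1 ≤ m e ∧ G.ends e = s(a, b)) := ⟨fun a b h => hsym h⟩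
  exact Std.Symm.symm (r := Relation.ReflTransGen (fun a b => ∃ e, 1 ≤ m e ∧ G.ends e = s(a, b))) _ _ hr

lemma handshake (G : MGraph V E) (m : E → ℕ) : ∑ x, G.deg m x = 2 * size m := by
  unfold deg size
  rw [Finset.sum_comm, Finset.mul_sum]
  refine Finset.sum_congr rfl fun e _ => ?_
  obtain ⟨a, b, hab⟩ : ∃ a b, G.ends e = s(a, b) := by
    induction G.ends e using Sym2.ind with | _ a b => exact ⟨a, b, rfl⟩
  have hne : a ≠ b := fun h => G.not_loop e (by rw [hab, h]; exact Sym2.mk_isDiag_iff.mpr rfl)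
  calc ∑ x, (if x ∈ G.ends e then m e else 0)
      = ∑ x, (if x ∈ ({a, b} : Finset V) then m e else 0) := by
        refine Finset.sum_congr rfl fun x _ => ?_
        simp [hab, Sym2.mem_iff]
    _ = 2 * m e := by
        rw [Finset.sum_ite_mem, Finset.univ_inter, Finset.sum_const,
          Finset.card_insert_of_notMem (by simp [hne]), Finset.card_singleton]
        simp [two_mul]

lemma even_oddset (G : MGraph V E) (m : E → ℕ) :
    Even (Finset.univ.filter (fun x => Odd (G.deg m x))).card := by
  have h : Even (∑ x, G.deg m x) := ⟨size m, by rw [handshake]; ring⟩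
  exact (Finset.even_sum_iff_even_card_odd _).mp h

lemma parity_ext {A B : Finset V} (v : V) (hA : Even A.card) (hB : Even B.card)
    (h : ∀ x, x ≠ v → (x ∈ A ↔ x ∈ B)) : A = B := by
  have key : A.erase v = B.erase v := by
    ext x
    simp only [Finset.mem_erase]
    exact ⟨fun ⟨hx, hxA⟩ => ⟨hx, (h x hx).mp hxA⟩, fun ⟨hx, hxB⟩ => ⟨hx, (h x hx).mpr hxB⟩⟩
  have hv : v ∈ A ↔ v ∈ B := by
    by_cases hvA : v ∈ A <;> by_cases hvB : v ∈ B
    · simp [hvA, hvB]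
    · exfalso
      have h1 := Finset.card_erase_add_one hvA
      rw [key, Finset.erase_eq_of_notMem hvB] at h1
      rw [Nat.even_iff] at hA hB
      omega
    · exfalso
      have h1 := Finset.card_erase_add_one hvB
      rw [← key, Finset.erase_eq_of_notMem hvA] at h1
      rw [Nat.even_iff] at hA hB
      omega
    · simp [hvA, hvB]
  ext x
  by_cases hx : x = v
  · subst hx; exact hv
  · exact h x hx

lemma deg_add (G : MGraph V E) (m m' : E → ℕ) (x : V) :
    G.deg (fun e => m e + m' e) x = G.deg m x + G.deg m' x := by
  unfold deg
  rw [← Finset.sum_add_distrib]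
  refine Finset.sum_congr rfl fun e _ => ?_
  split <;> simp

lemma size_add (m m' : E → ℕ) : size (fun e => m e + m' e) = size m + size m' := by
  unfold size; exact Finset.sum_add_distrib

lemma deg_zero_of_not_mem {G : MGraph V E} {m : E → ℕ} {Es : Finset E} {A : Finset V}
    (hsupp : ∀ e ∉ Es, m e = 0) (hEnds : ∀ e ∈ Es, ∀ x ∈ G.ends e, x ∈ A)
    {x : V} (hx : x ∉ A) : G.deg m x = 0 := by
  unfold deg
  refine Finset.sum_eq_zero fun e _ => ?_
  split
  · rename_i hxe
    by_cases he : e ∈ Es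
    · exact absurd (hEnds e he x hxe) hx
    · exact hsupp e he
  · rfl

noncomputable def pdeg (G : MGraph V E) (f : E → ZMod 2) (x : V) : ZMod 2 :=
  ∑ e, if x ∈ G.ends e then f e else 0

lemma pdeg_add (G : MGraph V E) (f g : E → ZMod 2) (x : V) :
    G.pdeg (fun e => f e + g e) x = G.pdeg f x + G.pdeg g x := by
  unfold pdeg
  rw [← Finset.sum_add_distrib]
  refine Finset.sum_congr rfl fun e _ => ?_
  split <;> simp

lemma exists_pdeg_path {G : MGraph V E} {Es : Finset E} {u w : V}
    (h : G.Reach (fun e => if e ∈ Es then 1 else 0) u w) :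
    ∃ f : E → ZMod 2, (∀ e ∉ Es, f e = 0) ∧
      ∀ x, G.pdeg f x = (if x = u then 1 else 0) + (if x = w then 1 else 0) := by
  induction h with
  | refl =>
    refine ⟨fun _ => 0, fun _ _ => rfl, fun x => ?_⟩
    unfold pdeg
    by_cases hx : x = u <;> simp [hx]
    decide
  | @tail b c hab hbc ih =>
    obtain ⟨e, hme, hse⟩ := hbc
    have he : e ∈ Es := by by_contra h; simp [h] at hme
    obtain ⟨f, hf0, hfd⟩ := ih
    have hbc' : b ≠ c := fun h => G.not_loop e (by rw [hse, h]; exact Sym2.mk_isDiag_iff.mpr rfl)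
    refine ⟨fun e' => f e' + (if e' = e then 1 else 0), ?_, ?_⟩
    · intro e' he'
      have hne : e' ≠ e := fun h => he' (h ▸ he)
      simp [hf0 e' he', hne]
    · intro x
      have hsingle : G.pdeg (fun e' => if e' = e then (1 : ZMod 2) else 0) x
          = if x ∈ G.ends e then 1 else 0 := by
        unfold pdeg
        rw [Finset.sum_eq_single e (fun b _ hb => by simp [hb]) (by simp)]
        simp
      rw [pdeg_add, hsingle, hfd x, hse]
      have h11 : (1 : ZMod 2) + 1 = 0 := by decide
      by_cases h1 : x = b <;> by_cases h2 : x = c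
      · exact absurd (h1.symm.trans h2) hbc'
      · subst h1
        simp [Sym2.mem_iff, hbc', add_assoc, h11]
      · subst h2
        simp [Sym2.mem_iff, Ne.symm hbc']
      · simp [Sym2.mem_iff, h1, h2]

lemma exists_pdeg_join {G : MGraph V E} {Es : Finset E} {A : Finset V}
    (hc : ∀ u ∈ A, ∀ w ∈ A, G.Reach (fun e => if e ∈ Es then 1 else 0) u w)
    (S : Finset V) (hSA : S ⊆ A) (hSe : Even S.card) :
    ∃ f : E → ZMod 2, (∀ e ∉ Es, f e = 0) ∧
      ∀ x, G.pdeg f x = if x ∈ S then 1 else 0 := by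
  classical
  revert hSA hSe
  induction S using Finset.strongInduction with
  | _ S ih =>
    intro hSA hSe
    rcases S.eq_empty_or_nonempty with rfl | ⟨x, hx⟩
    · exact ⟨fun _ => 0, fun _ _ => rfl, fun z => by simp [pdeg]⟩
    · have hcards : 2 ≤ S.card := by
        have h1 : 1 ≤ S.card := Finset.card_pos.mpr ⟨x, hx⟩
        rcases hSe with ⟨r, hr⟩
        omega
      have hx2 : (S.erase x).Nonempty := by
        rw [← Finset.card_pos, Finset.card_erase_of_mem hx]
        omega
      obtain ⟨y, hy⟩ := hx2
      have hxy : y ≠ x := (Finset.mem_erase.mp hy).1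
      have hyS : y ∈ S := (Finset.mem_erase.mp hy).2
      have hsub : (S.erase x).erase y ⊂ S :=
        lt_of_le_of_lt (Finset.erase_subset _ _) (Finset.erase_ssubset hx)
      have hcard : ((S.erase x).erase y).card = S.card - 2 := by
        rw [Finset.card_erase_of_mem hy, Finset.card_erase_of_mem hx]
        omega
      have hS'A : (S.erase x).erase y ⊆ A := fun z hz =>
        hSA (Finset.mem_of_mem_erase (Finset.mem_of_mem_erase hz))
      have hS'e : Even ((S.erase x).erase y).card := by
        rcases hSe with ⟨r, hr⟩
        rw [hcard]
        exact ⟨r - 1, by omega⟩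
      obtain ⟨g, hg0, hgd⟩ := ih _ hsub hS'A hS'e
      obtain ⟨p, hp0, hpd⟩ := exists_pdeg_path (hc x (hSA hx) y (hSA hyS))
      refine ⟨fun e => g e + p e,
        fun e he => by show g e + p e = 0; rw [hg0 e he, hp0 e he, add_zero], fun z => ?_⟩
      rw [pdeg_add, hgd, hpd]
      by_cases h1 : z = x <;> by_cases h2 : z = y
      · exact absurd (h1.symm.trans h2) (fun h => hxy h.symm)
      · subst h1
        simp [Finset.mem_erase, hx, Ne.symm hxy]
      · subst h2
        simp [Finset.mem_erase, hyS, hxy]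
      · simp [Finset.mem_erase, h1, h2]

lemma exists_conn_join {G : MGraph V E} {Es : Finset E} {A : Finset V}
    (hc : ∀ u ∈ A, ∀ w ∈ A, G.Reach (fun e => if e ∈ Es then 1 else 0) u w)
    (S : Finset V) (hSA : S ⊆ A) (hSe : Even S.card) :
    ∃ m : E → ℕ, Sub2 m ∧ (∀ e ∉ Es, m e = 0) ∧
      (∀ u ∈ A, ∀ w ∈ A, G.Reach m u w) ∧
      (∀ x, x ∈ S ↔ Odd (G.deg m x)) := by
  obtain ⟨f, hf0, hfd⟩ := exists_pdeg_join hc S hSA hSe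
  have h2cases : ∀ a : ZMod 2, a ≠ 1 → a = 0 := by decide
  refine ⟨fun e => if e ∈ Es then (if f e = 1 then 1 else 2) else 0, ?_, ?_, ?_, ?_⟩
  · intro e
    dsimp only
    split
    · split <;> omega
    · omega
  · intro e he; simp [he]
  · intro u hu w hw
    refine reach_mono (fun e => ?_) (hc u hu w hw)
    split
    · split <;> omega
    · omega
  · intro x
    have hodd : ∀ n : ℕ, Odd n ↔ ((n : ZMod 2) = 1) := by
      intro n
      rw [Nat.odd_iff]
      constructor
      · intro h
        rw [← ZMod.natCast_mod, h]
        simp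
      · intro h
        by_contra hne
        have h0 : n % 2 = 0 := by omega
        rw [← ZMod.natCast_mod, h0] at h
        exact absurd h (by decide)
    have hcast : ((G.deg (fun e => if e ∈ Es then (if f e = 1 then 1 else 2) else 0) x : ℕ)
        : ZMod 2) = G.pdeg f x := by
      unfold deg pdeg
      rw [Nat.cast_sum]
      refine Finset.sum_congr rfl fun e _ => ?_
      by_cases hxe : x ∈ G.ends e
      · simp only [hxe, if_true]
        by_cases he : e ∈ Es
        · simp only [he, if_true]
          by_cases hf : f e = 1
          · simp [hf]
          · rw [h2cases _ hf]
            simp [hf]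
            decide
        · simp [he, hf0 e he]
      · simp [hxe]
    rw [hodd, hcast, hfd x]
    by_cases hx : x ∈ S <;> simp [hx]

lemma restrict_reach {G : MGraph V E} {V1 V2 : Finset V} {E1 E2 : Finset E} {v : V}
    (hVi : V1 ∩ V2 = {v})
    (hE1 : ∀ e ∈ E1, ∀ x ∈ G.ends e, x ∈ V1)
    (hE2 : ∀ e ∈ E2, ∀ x ∈ G.ends e, x ∈ V2)
    (hEu : E1 ∪ E2 = Finset.univ)
    {m : E → ℕ} {u w : V} (hu : u ∈ V1) (h : G.Reach m u w) :
    (w ∈ V1 → G.Reach (fun e => if e ∈ E1 then m e else 0) u w) ∧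
    (w ∈ V2 → G.Reach (fun e => if e ∈ E1 then m e else 0) u v ∧
       G.Reach (fun e => if e ∈ E2 then m e else 0) v w) := by
  have hmemv : ∀ x, x ∈ V1 → x ∈ V2 → x = v := by
    intro x h1 h2
    have hx : x ∈ V1 ∩ V2 := Finset.mem_inter.mpr ⟨h1, h2⟩
    rw [hVi] at hx
    exact Finset.mem_singleton.mp hx
  induction h with
  | refl =>
    refine ⟨fun _ => Relation.ReflTransGen.refl, fun h2 => ?_⟩
    have huv : u = v := hmemv u hu h2
    subst huv
    exact ⟨Relation.ReflTransGen.refl, Relation.ReflTransGen.refl⟩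
  | @tail b c hab hbc ih =>
    obtain ⟨e, hme, hse⟩ := hbc
    have he12 : e ∈ E1 ∨ e ∈ E2 := by
      have he : e ∈ E1 ∪ E2 := hEu ▸ Finset.mem_univ e
      exact Finset.mem_union.mp he
    have hbmem : b ∈ G.ends e := by rw [hse]; exact Sym2.mem_mk_left _ _
    have hcmem : c ∈ G.ends e := by rw [hse]; exact Sym2.mem_mk_right _ _
    rcases he12 with he | he
    · have hb1 : b ∈ V1 := hE1 e he b hbmem
      have hc1 : c ∈ V1 := hE1 e he c hcmem
      have step : G.Reach (fun e' => if e' ∈ E1 then m e' else 0) u c :=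
        Relation.ReflTransGen.tail (ih.1 hb1) ⟨e, by simpa [he] using hme, hse⟩
      refine ⟨fun _ => step, fun hc2 => ?_⟩
      have hcv : c = v := hmemv c hc1 hc2
      subst hcv
      exact ⟨step, Relation.ReflTransGen.refl⟩
    · have hb2 : b ∈ V2 := hE2 e he b hbmem
      have hc2 : c ∈ V2 := hE2 e he c hcmem
      obtain ⟨hv1, hv2⟩ := ih.2 hb2
      have step : G.Reach (fun e' => if e' ∈ E2 then m e' else 0) v c :=
        Relation.ReflTransGen.tail hv2 ⟨e, by simpa [he] using hme, hse⟩
      refine ⟨fun hc1 => ?_, fun _ => ⟨hv1, step⟩⟩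
      have hcv : c = v := hmemv c hc1 hc2
      subst hcv
      exact hv1

end MGraph

namespace Graph

open MGraph

theorem stmt_2 {V E : Type} [Fintype V] [Fintype E] [DecidableEq V] [DecidableEq E]
    (G : MGraph V E) (V1 V2 : Finset V) (E1 E2 : Finset E) (v : V)
    (hVu : V1 ∪ V2 = Finset.univ) (hVi : V1 ∩ V2 = {v})
    (hEu : E1 ∪ E2 = Finset.univ) (hEd : Disjoint E1 E2)
    (hE1 : ∀ e ∈ E1, ∀ x ∈ G.ends e, x ∈ V1)
    (hE2 : ∀ e ∈ E2, ∀ x ∈ G.ends e, x ∈ V2)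
    (hc1 : ∀ u ∈ V1, ∀ w ∈ V1, G.Reach (fun e => if e ∈ E1 then 1 else 0) u w)
    (hc2 : ∀ u ∈ V2, ∀ w ∈ V2, G.Reach (fun e => if e ∈ E2 then 1 else 0) u w)
    (T T1 T2 : Finset V) (hT : Even T.card)
    (hT1 : T1 = (T ∩ V1) \ {v} ∨ T1 = (T ∩ V1) ∪ {v}) (hT1e : Even T1.card)
    (hT2 : T2 = (T ∩ V2) \ {v} ∨ T2 = (T ∩ V2) ∪ {v}) (hT2e : Even T2.card) :
    optCTJrel G Finset.univ Finset.univ T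
      = optCTJrel G V1 E1 T1 + optCTJrel G V2 E2 T2 := by
  classical
  have hv1 : v ∈ V1 := by
    have hx : v ∈ V1 ∩ V2 := by rw [hVi]; exact Finset.mem_singleton_self v
    exact (Finset.mem_inter.mp hx).1
  have hv2 : v ∈ V2 := by
    have hx : v ∈ V1 ∩ V2 := by rw [hVi]; exact Finset.mem_singleton_self v
    exact (Finset.mem_inter.mp hx).2
  have hmemv : ∀ x, x ∈ V1 → x ∈ V2 → x = v := by
    intro x h1 h2
    have hx : x ∈ V1 ∩ V2 := Finset.mem_inter.mpr ⟨h1, h2⟩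
    rw [hVi] at hx
    exact Finset.mem_singleton.mp hx
  have hT1sub : T1 ⊆ V1 := by
    rcases hT1 with h | h <;> subst h <;> intro x hx
    · exact (Finset.mem_inter.mp (Finset.mem_sdiff.mp hx).1).2
    · rcases Finset.mem_union.mp hx with h | h
      · exact (Finset.mem_inter.mp h).2
      · rw [Finset.mem_singleton.mp h]; exact hv1
  have hT2sub : T2 ⊆ V2 := by
    rcases hT2 with h | h <;> subst h <;> intro x hx
    · exact (Finset.mem_inter.mp (Finset.mem_sdiff.mp hx).1).2
    · rcases Finset.mem_union.mp hx with h | h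
      · exact (Finset.mem_inter.mp h).2
      · rw [Finset.mem_singleton.mp h]; exact hv2
  have hT1mem : ∀ x, x ∈ V1 → x ≠ v → (x ∈ T1 ↔ x ∈ T) := by
    intro x hx hxv
    rcases hT1 with h | h <;> subst h <;>
      simp [Finset.mem_sdiff, Finset.mem_inter, Finset.mem_union,
        Finset.mem_singleton, hx, hxv]
  have hT2mem : ∀ x, x ∈ V2 → x ≠ v → (x ∈ T2 ↔ x ∈ T) := by
    intro x hx hxv
    rcases hT2 with h | h <;> subst h <;>
      simp [Finset.mem_sdiff, Finset.mem_inter, Finset.mem_union,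
        Finset.mem_singleton, hx, hxv]
  have parity_glue : ∀ (m : E → ℕ) (T' : Finset V), Even T'.card →
      (∀ x, x ≠ v → (x ∈ T' ↔ Odd (G.deg m x))) →
      ∀ x, x ∈ T' ↔ Odd (G.deg m x) := by
    intro m T' hTe h x
    have hO : T' = Finset.univ.filter (fun y => Odd (G.deg m y)) := by
      refine parity_ext v hTe (even_oddset G m) ?_
      intro y hy
      rw [h y hy]
      simp
    rw [hO]
    simp
  have combine : ∀ m1 m2 : E → ℕ, Sub2 m1 → (∀ e ∉ E1, m1 e = 0) →
      (∀ u ∈ V1, ∀ w ∈ V1, G.Reach m1 u w) → (∀ x, x ∈ T1 ↔ Odd (G.deg m1 x)) →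
      Sub2 m2 → (∀ e ∉ E2, m2 e = 0) →
      (∀ u ∈ V2, ∀ w ∈ V2, G.Reach m2 u w) → (∀ x, x ∈ T2 ↔ Odd (G.deg m2 x)) →
      ∃ m : E → ℕ, Sub2 m ∧ (∀ u w : V, G.Reach m u w) ∧
        (∀ x, x ∈ T ↔ Odd (G.deg m x)) ∧ size m = size m1 + size m2 := by
    intro m1 m2 hs1 hsup1 hr1 hp1 hs2 hsup2 hr2 hp2
    refine ⟨fun e => m1 e + m2 e, ?_, ?_, ?_, size_add m1 m2⟩
    · intro e
      show m1 e + m2 e ≤ 2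
      by_cases he : e ∈ E1
      · have he2 : e ∉ E2 := Finset.disjoint_left.mp hEd he
        have h1 := hs1 e
        have h0 := hsup2 e he2
        omega
      · have h0 := hsup1 e he
        have h2 := hs2 e
        omega
    · have reach_v : ∀ x : V, G.Reach (fun e => m1 e + m2 e) x v := by
        intro x
        have hx : x ∈ V1 ∪ V2 := hVu ▸ Finset.mem_univ x
        rcases Finset.mem_union.mp hx with h | h
        · exact reach_mono (fun e => Nat.le_add_right _ _) (hr1 x h v hv1)
        · exact reach_mono (fun e => Nat.le_add_left _ _) (hr2 x h v hv2)
      exact fun u w => Relation.ReflTransGen.trans (reach_v u) (reach_symm (reach_v w))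
    · refine parity_glue _ T hT ?_
      intro x hxv
      rw [deg_add]
      have hx : x ∈ V1 ∪ V2 := hVu ▸ Finset.mem_univ x
      rcases Finset.mem_union.mp hx with h | h
      · have hx2 : x ∉ V2 := fun h2 => hxv (hmemv x h h2)
        have hd2 : G.deg m2 x = 0 := deg_zero_of_not_mem hsup2 hE2 hx2
        rw [hd2, add_zero, ← hT1mem x h hxv]
        exact hp1 x
      · have hx1 : x ∉ V1 := fun h1 => hxv (hmemv x h1 h)
        have hd1 : G.deg m1 x = 0 := deg_zero_of_not_mem hsup1 hE1 hx1
        rw [hd1, zero_add, ← hT2mem x h hxv]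
        exact hp2 x
  have hVi2 : V2 ∩ V1 = {v} := by rw [Finset.inter_comm]; exact hVi
  have hEu2 : E2 ∪ E1 = Finset.univ := by rw [Finset.union_comm]; exact hEu
  have split : ∀ m : E → ℕ, Sub2 m → (∀ u w : V, G.Reach m u w) →
      (∀ x, x ∈ T ↔ Odd (G.deg m x)) →
      ∃ m1 m2 : E → ℕ,
        (Sub2 m1 ∧ (∀ e ∉ E1, m1 e = 0) ∧ (∀ u ∈ V1, ∀ w ∈ V1, G.Reach m1 u w) ∧
          (∀ x, x ∈ T1 ↔ Odd (G.deg m1 x))) ∧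
        (Sub2 m2 ∧ (∀ e ∉ E2, m2 e = 0) ∧ (∀ u ∈ V2, ∀ w ∈ V2, G.Reach m2 u w) ∧
          (∀ x, x ∈ T2 ↔ Odd (G.deg m2 x))) ∧
        size m = size m1 + size m2 := by
    intro m hsm hrm hpm
    have hm : m = fun e => (if e ∈ E1 then m e else 0) + (if e ∈ E2 then m e else 0) := by
      funext e
      by_cases he : e ∈ E1
      · have he2 : e ∉ E2 := Finset.disjoint_left.mp hEd he
        simp [he, he2]
      · have he2 : e ∈ E2 := by
          have h' : e ∈ E1 ∪ E2 := hEu ▸ Finset.mem_univ e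
          rcases Finset.mem_union.mp h' with h | h
          · exact absurd h he
          · exact h
        simp [he, he2]
    have hdm : ∀ x, G.deg m x
        = G.deg (fun e => if e ∈ E1 then m e else 0) x
          + G.deg (fun e => if e ∈ E2 then m e else 0) x := by
      intro x
      conv_lhs => rw [hm]
      exact deg_add G _ _ x
    refine ⟨fun e => if e ∈ E1 then m e else 0, fun e => if e ∈ E2 then m e else 0,
      ⟨?_, ?_, ?_, ?_⟩, ⟨?_, ?_, ?_, ?_⟩, ?_⟩
    · intro e
      show (if e ∈ E1 then m e else 0) ≤ 2
      split
      · exact hsm e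
      · omega
    · intro e he; simp [he]
    · intro u hu w hw
      exact (restrict_reach hVi hE1 hE2 hEu hu (hrm u w)).1 hw
    · refine parity_glue _ T1 hT1e ?_
      intro x hxv
      by_cases hx1 : x ∈ V1
      · have hx2 : x ∉ V2 := fun h2 => hxv (hmemv x hx1 h2)
        have hd2 : G.deg (fun e => if e ∈ E2 then m e else 0) x = 0 :=
          deg_zero_of_not_mem (fun e he => by simp [he]) hE2 hx2
        have h := hpm x
        rw [hdm x, hd2, add_zero] at h
        rw [hT1mem x hx1 hxv]
        exact h
      · have hd1 : G.deg (fun e => if e ∈ E1 then m e else 0) x = 0 :=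
          deg_zero_of_not_mem (fun e he => by simp [he]) hE1 hx1
        rw [hd1]
        constructor
        · intro h; exact absurd (hT1sub h) hx1
        · rintro ⟨k, hk⟩; omega
    · intro e
      show (if e ∈ E2 then m e else 0) ≤ 2
      split
      · exact hsm e
      · omega
    · intro e he; simp [he]
    · intro u hu w hw
      exact (restrict_reach hVi2 hE2 hE1 hEu2 hu (hrm u w)).1 hw
    · refine parity_glue _ T2 hT2e ?_
      intro x hxv
      by_cases hx2 : x ∈ V2
      · have hx1 : x ∉ V1 := fun h1 => hxv (hmemv x h1 hx2)
        have hd1 : G.deg (fun e => if e ∈ E1 then m e else 0) x = 0 :=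
          deg_zero_of_not_mem (fun e he => by simp [he]) hE1 hx1
        have h := hpm x
        rw [hdm x, hd1, zero_add] at h
        rw [hT2mem x hx2 hxv]
        exact h
      · have hd2 : G.deg (fun e => if e ∈ E2 then m e else 0) x = 0 :=
          deg_zero_of_not_mem (fun e he => by simp [he]) hE2 hx2
        rw [hd2]
        constructor
        · intro h; exact absurd (hT2sub h) hx2
        · rintro ⟨k, hk⟩; omega
    · conv_lhs => rw [hm]
      exact size_add _ _
  have mem_opt_le : ∀ {A : Finset V} {Es : Finset E} {T' : Finset V} {m : E → ℕ},
      Sub2 m → (∀ e ∉ Es, m e = 0) → (∀ u ∈ A, ∀ w ∈ A, G.Reach m u w) →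
      (∀ x, x ∈ T' ↔ Odd (G.deg m x)) → optCTJrel G A Es T' ≤ size m := by
    intro A Es T' m h1 h2 h3 h4
    unfold optCTJrel
    exact Nat.sInf_le ⟨m, h1, h2, h3, h4, rfl⟩
  have opt_spec : ∀ (A : Finset V) (Es : Finset E) (T' : Finset V) (m0 : E → ℕ),
      Sub2 m0 → (∀ e ∉ Es, m0 e = 0) → (∀ u ∈ A, ∀ w ∈ A, G.Reach m0 u w) →
      (∀ x, x ∈ T' ↔ Odd (G.deg m0 x)) →
      ∃ m : E → ℕ, Sub2 m ∧ (∀ e ∉ Es, m e = 0) ∧ (∀ u ∈ A, ∀ w ∈ A, G.Reach m u w) ∧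
        (∀ x, x ∈ T' ↔ Odd (G.deg m x)) ∧ size m = optCTJrel G A Es T' := by
    intro A Es T' m0 h1 h2 h3 h4
    have hne : {n | ∃ m : E → ℕ, Sub2 m ∧ (∀ e ∉ Es, m e = 0) ∧
        (∀ u ∈ A, ∀ w ∈ A, G.Reach m u w) ∧
        (∀ w, w ∈ T' ↔ Odd (G.deg m w)) ∧ size m = n}.Nonempty :=
      ⟨size m0, m0, h1, h2, h3, h4, rfl⟩
    obtain ⟨m, hm⟩ := Nat.sInf_mem hne
    exact ⟨m, hm.1, hm.2.1, hm.2.2.1, hm.2.2.2.1, hm.2.2.2.2⟩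
  obtain ⟨ma, ha1, ha2, ha3, ha4⟩ := exists_conn_join hc1 T1 hT1sub hT1e
  obtain ⟨mb, hb1, hb2, hb3, hb4⟩ := exists_conn_join hc2 T2 hT2sub hT2e
  apply le_antisymm
  · obtain ⟨m1', q1, q2, q3, q4, q5⟩ := opt_spec V1 E1 T1 ma ha1 ha2 ha3 ha4
    obtain ⟨m2', r1, r2, r3, r4, r5⟩ := opt_spec V2 E2 T2 mb hb1 hb2 hb3 hb4
    obtain ⟨mm, s1, s2, s3, s4⟩ := combine m1' m2' q1 q2 q3 q4 r1 r2 r3 r4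
    have hle := mem_opt_le (A := Finset.univ) (Es := Finset.univ) (T' := T)
      s1 (fun e he => absurd (Finset.mem_univ e) he) (fun u _ w _ => s2 u w) s3
    rw [s4, q5, r5] at hle
    exact hle
  · obtain ⟨mc, mc1, mc2, mc3, mc4⟩ := combine ma mb ha1 ha2 ha3 ha4 hb1 hb2 hb3 hb4
    obtain ⟨mm, q1, q2, q3, q4, q5⟩ := opt_spec Finset.univ Finset.univ T mc mc1
      (fun e he => absurd (Finset.mem_univ e) he) (fun u _ w _ => mc2 u w) mc3
    obtain ⟨m1', m2', ⟨p1, p2, p3, p4⟩, ⟨r1, r2, r3, r4⟩, hsz⟩ :=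
      split mm q1 (fun u w => q3 u (Finset.mem_univ u) w (Finset.mem_univ w)) q4
    have h1 := mem_opt_le p1 p2 p3 p4
    have h2 := mem_opt_le r1 r2 r3 r4
    have hfin : optCTJrel G V1 E1 T1 + optCTJrel G V2 E2 T2 ≤ size mm := by
      rw [hsz]
      exact add_le_add h1 h2
    rw [q5] at hfin
    exact hfin


end Graph
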